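/- For all a, b > 0 and ε > 0, the function β_ε satisfies the bounds (ε²/4)·(√a - √b)² ≤ (ε²/4)·(a - b)²/(a + b) ≤ β_ε(a,b) ≤ (ε²/2)·(√a - √b)². -/

import Mathlib

open Real intervalIntegral

/-- The logarithmic mean `Λ(s,t)`. -/
noncomputable def logMean (s t : ℝ) : ℝ :=
  if s = t then s else (s - t) / (Real.log s - Real.log t)

/-- The harmonic-logarithmic mean `Λ_H(s,t) = st/Λ(s,t)`. -/
noncomputable def harmLogMean (s t : ℝ) : ℝ := s * t / logMean s t

/-- `α*_ε(a,b,ξ) = ε ∫₀^ξ sinh(x/ε) Λ_H(a e^{-x/ε}, b e^{x/ε}) dx`. -/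
noncomputable def alphaEps (ε a b ξ : ℝ) : ℝ :=
  ε * ∫ x in (0:ℝ)..ξ,
    Real.sinh (x / ε) * harmLogMean (a * Real.exp (-x / ε)) (b * Real.exp (x / ε))

/-- `β_ε(a,b) = α*_ε(a, b, (ε/2) log(a/b))`. -/
noncomputable def betaEps (ε a b : ℝ) : ℝ :=
  alphaEps ε a b ((ε / 2) * Real.log (a / b))


/-- `G v = v / sinh v`, extended by `1` at `0`. -/
noncomputable def Gfun (v : ℝ) : ℝ := if v = 0 then 1 else v / Real.sinh v

lemma Gfun_zero : Gfun 0 = 1 := by simp [Gfun]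

lemma Gfun_neg (v : ℝ) : Gfun (-v) = Gfun v := by
  rcases eq_or_ne v 0 with rfl | hv
  · simp
  · simp [Gfun, hv, neg_ne_zero.mpr hv, Real.sinh_neg, neg_div_neg_eq]

lemma Gfun_le_one (v : ℝ) : Gfun v ≤ 1 := by
  have h : ∀ w : ℝ, 0 ≤ w → Gfun w ≤ 1 := by
    intro w hw
    rcases eq_or_lt_of_le hw with rfl | hw'
    · simp [Gfun]
    · have hs : w < Real.sinh w := Real.self_lt_sinh_iff.mpr hw'
      have hs0 : 0 < Real.sinh w := lt_trans hw' hs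
      simp only [Gfun, ne_of_gt hw', if_neg (ne_of_gt hw')]
      exact (div_le_one hs0).mpr hs.le
  rcases le_total 0 v with hv | hv
  · exact h v hv
  · rw [← Gfun_neg]; exact h (-v) (by linarith)

lemma Gfun_nonneg (v : ℝ) : 0 ≤ Gfun v := by
  have h : ∀ w : ℝ, 0 ≤ w → 0 ≤ Gfun w := by
    intro w hw
    rcases eq_or_lt_of_le hw with rfl | hw'
    · simp [Gfun]
    · have hs0 : 0 < Real.sinh w := lt_trans hw' (Real.self_lt_sinh_iff.mpr hw')
      simp only [Gfun, if_neg (ne_of_gt hw')]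
      positivity
  rcases le_total 0 v with hv | hv
  · exact h v hv
  · rw [← Gfun_neg]; exact h (-v) (by linarith)

lemma continuous_Gfun : Continuous Gfun := by
  rw [continuous_iff_continuousAt]
  intro v
  rcases eq_or_ne v 0 with rfl | hv
  · have h1 : Filter.Tendsto (fun w : ℝ => Real.sinh w / w) (nhdsWithin 0 {(0:ℝ)}ᶜ) (nhds 1) := by
      have := Real.hasDerivAt_sinh 0
      rw [hasDerivAt_iff_tendsto_slope, Real.cosh_zero] at this
      refine this.congr fun w => ?_
      simp [slope_def_field]
    have h2 : Filter.Tendsto Gfun (nhdsWithin 0 {(0:ℝ)}ᶜ) (nhds 1) := by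
      have h3 := (h1.inv₀ one_ne_zero)
      rw [inv_one] at h3
      refine h3.congr' ?_
      filter_upwards [self_mem_nhdsWithin] with w hw
      simp only [Set.mem_compl_iff, Set.mem_singleton_iff] at hw
      simp [Gfun, hw, inv_div]
    have : Filter.Tendsto Gfun (nhds 0) (nhds 1) := by
      rw [← nhdsNE_sup_pure 0, Filter.tendsto_sup]
      exact ⟨h2, by simpa [Gfun_zero] using tendsto_pure_nhds Gfun 0⟩
    simpa [ContinuousAt, Gfun_zero] using this
  · have hev : ∀ᶠ w in nhds v, w ≠ 0 := eventually_ne_nhds hv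
    have : ContinuousAt (fun w => w / Real.sinh w) v :=
      ContinuousAt.div continuousAt_id (Real.continuous_sinh.continuousAt)
        (Real.sinh_ne_zero.mpr hv)
    refine this.congr ?_
    filter_upwards [hev] with w hw
    simp [Gfun, hw]


-- sinh v * cosh (c - v) ≤ v * cosh c for 0 ≤ v ≤ c
lemma sinh_mul_cosh_le (c v : ℝ) (h0 : 0 ≤ v) (hvc : v ≤ c) :
    Real.sinh v * Real.cosh (c - v) ≤ v * Real.cosh c := by
  have hprod : 2 * (Real.sinh v * Real.cosh (c - v))
      = Real.sinh c - Real.sinh (c - 2 * v) := by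
    have h1 : Real.sinh (v + (c - v)) = Real.sinh v * Real.cosh (c - v)
        + Real.cosh v * Real.sinh (c - v) := Real.sinh_add _ _
    have h2 : Real.sinh (v - (c - v)) = Real.sinh v * Real.cosh (c - v)
        - Real.cosh v * Real.sinh (c - v) := Real.sinh_sub _ _
    have h3 : Real.sinh (c - 2 * v) = - Real.sinh (v - (c - v)) := by
      rw [← Real.sinh_neg]; ring_nf
    have h5 : Real.sinh c = Real.sinh v * Real.cosh (c - v)
        + Real.cosh v * Real.sinh (c - v) := by
      rw [← h1]; ring_nf
    linarith [h5, h2, h3]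
  have hint : Real.sinh c - Real.sinh (c - 2 * v)
      = ∫ x in (c - 2 * v)..c, Real.cosh x := by
    rw [integral_eq_sub_of_hasDerivAt (fun x _ => Real.hasDerivAt_sinh x)
      (Real.continuous_cosh.intervalIntegrable _ _)]
  have hmono : (∫ x in (c - 2 * v)..c, Real.cosh x)
      ≤ ∫ x in (c - 2 * v)..c, Real.cosh c := by
    apply integral_mono_on (by linarith)
      (Real.continuous_cosh.intervalIntegrable _ _)
      (intervalIntegrable_const)
    intro x hx
    rw [Set.mem_Icc] at hx
    rw [Real.cosh_le_cosh]
    have hc0 : 0 ≤ c := le_trans h0 hvc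
    rw [abs_le, abs_of_nonneg hc0]
    constructor <;> linarith [hx.1, hx.2]
  rw [integral_const, smul_eq_mul] at hmono
  nlinarith [hmono, hint, hprod]







lemma sqrt_mul_exp (a b : ℝ) (ha : 0 < a) (hb : 0 < b) :
    Real.sqrt (a * b) * Real.exp ((1 / 2) * Real.log (a / b)) = a := by
  have h1 : Real.exp ((1 / 2) * Real.log (a / b)) = Real.sqrt (a / b) := by
    rw [show (1 / 2 : ℝ) * Real.log (a / b) = Real.log (a / b) / 2 by ring,
      ← Real.log_sqrt (by positivity), Real.exp_log (by positivity)]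
  rw [h1, ← Real.sqrt_mul (by positivity)]
  rw [show a * b * (a / b) = a ^ 2 by field_simp]
  exact Real.sqrt_sq ha.le

lemma harm_eq (a b u : ℝ) (ha : 0 < a) (hb : 0 < b) :
    harmLogMean (a * Real.exp (-u)) (b * Real.exp u)
      = Real.sqrt (a * b) * Gfun ((1 / 2) * Real.log (a / b) - u) := by
  set c : ℝ := (1 / 2) * Real.log (a / b) with hc
  set sab : ℝ := Real.sqrt (a * b) with hsab
  have hsab0 : 0 < sab := Real.sqrt_pos.mpr (by positivity)
  have hA : sab * Real.exp (c - u) = a * Real.exp (-u) := by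
    rw [Real.exp_sub, ← mul_div_assoc, sqrt_mul_exp a b ha hb, Real.exp_neg,
      div_eq_mul_inv]
  have hB : sab * Real.exp (-(c - u)) = b * Real.exp u := by
    have hBb : sab * Real.exp (-c) = b := by
      have : Real.sqrt (b * a) * Real.exp ((1 / 2) * Real.log (b / a)) = b :=
        sqrt_mul_exp b a hb ha
      rw [mul_comm b a] at this
      rw [← this, hc]
      congr 1
      rw [Real.log_div (ne_of_gt hb) (ne_of_gt ha), Real.log_div (ne_of_gt ha) (ne_of_gt hb)]
      ring_nf
    rw [neg_sub, Real.exp_sub, show sab * (Real.exp u / Real.exp c)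
        = sab * Real.exp (-c) * Real.exp u by rw [Real.exp_neg]; ring, hBb]
  set s : ℝ := a * Real.exp (-u) with hs
  set t : ℝ := b * Real.exp u with ht
  have hs0 : 0 < s := by positivity
  have ht0 : 0 < t := by positivity
  have hst : s * t = a * b := by
    rw [hs, ht]
    rw [show a * Real.exp (-u) * (b * Real.exp u) = a * b * (Real.exp (-u) * Real.exp u)
      by ring, ← Real.exp_add, neg_add_cancel, Real.exp_zero, mul_one]
  rcases eq_or_ne s t with hstEq | hstNe
  · -- s = t ⇒ c = u
    have hcu : c = u := by
      have h1 : Real.exp (c - u) = Real.exp (-(c - u)) := by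
        have := hA.trans (hstEq.trans hB.symm)
        exact mul_left_cancel₀ (ne_of_gt hsab0) this
      have := Real.exp_injective h1
      linarith
    have htv : t = sab := by
      have h2 : t ^ 2 = a * b := by rw [← hst, hstEq]; ring
      rw [hsab, ← h2, Real.sqrt_sq ht0.le]
    rw [harmLogMean, logMean, if_pos hstEq, hcu, sub_self]
    simp only [Gfun, if_pos rfl, mul_one]
    rw [hstEq, htv]
    field_simp
    simp
  · -- s ≠ t
    have hlog : Real.log s - Real.log t = 2 * (c - u) := by
      rw [hs, ht, Real.log_mul (ne_of_gt ha) (Real.exp_ne_zero _),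
        Real.log_mul (ne_of_gt hb) (Real.exp_ne_zero _), Real.log_exp, Real.log_exp,
        hc, Real.log_div (ne_of_gt ha) (ne_of_gt hb)]
      ring
    have hcu : c - u ≠ 0 := by
      intro h
      apply hstNe
      have : Real.log s = Real.log t := by
        have := hlog; rw [h] at this; linarith
      calc s = Real.exp (Real.log s) := (Real.exp_log hs0).symm
        _ = Real.exp (Real.log t) := by rw [this]
        _ = t := Real.exp_log ht0
    have hsinh : Real.sinh (c - u) ≠ 0 := Real.sinh_ne_zero.mpr hcu
    have hsub : s - t = 2 * sab * Real.sinh (c - u) := by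
      rw [← hA, ← hB, Real.sinh_eq]; ring
    rw [harmLogMean, logMean, if_neg hstNe, hlog, hst, Gfun, if_neg hcu]
    rw [div_div_eq_mul_div, hsub]
    have hab : a * b = sab ^ 2 := (Real.sq_sqrt (by positivity)).symm
    rw [hab]
    field_simp

lemma betaEps_eq (ε a b : ℝ) (hε : 0 < ε) (ha : 0 < a) (hb : 0 < b) :
    betaEps ε a b = ε ^ 2 * Real.sqrt (a * b) *
      ∫ u in (0:ℝ)..((1 / 2) * Real.log (a / b)),
        Real.sinh u * Gfun ((1 / 2) * Real.log (a / b) - u) := by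
  set c : ℝ := (1 / 2) * Real.log (a / b) with hc
  have hεne : ε ≠ 0 := ne_of_gt hε
  have h1 : betaEps ε a b = ε * ∫ x in (0:ℝ)..(ε * c),
      (fun u => Real.sinh u * (Real.sqrt (a * b) * Gfun (c - u))) (x / ε) := by
    rw [betaEps, alphaEps, show (ε / 2) * Real.log (a / b) = ε * c by rw [hc]; ring]
    congr 1
    apply intervalIntegral.integral_congr
    intro x _
    simp only
    rw [show (-x / ε : ℝ) = -(x / ε) by ring, harm_eq a b (x / ε) ha hb]
  have h2 := integral_comp_div (a := (0:ℝ)) (b := ε * c)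
      (f := fun u => Real.sinh u * (Real.sqrt (a * b) * Gfun (c - u))) hεne
  have h3 : (∫ u in (0:ℝ)..c, Real.sinh u * (Real.sqrt (a * b) * Gfun (c - u)))
      = Real.sqrt (a * b) * ∫ u in (0:ℝ)..c, Real.sinh u * Gfun (c - u) := by
    rw [← intervalIntegral.integral_const_mul]
    congr 1
    funext u
    ring
  rw [h1, h2, zero_div, mul_div_cancel_left₀ c hεne, smul_eq_mul, h3]
  ring




noncomputable def Jint (c : ℝ) : ℝ := ∫ u in (0:ℝ)..c, Real.sinh u * Gfun (c - u)

lemma Jint_neg (c : ℝ) : Jint (-c) = Jint c := by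
  have h : ∀ u : ℝ, Real.sinh u * Gfun (-c - u)
      = -((fun w => Real.sinh w * Gfun (c - w)) (-u)) := by
    intro u
    simp only
    rw [Real.sinh_neg, show (c - -u : ℝ) = -(-c - u) by ring, Gfun_neg]
    ring
  rw [Jint]
  simp only [h]
  rw [intervalIntegral.integral_neg, intervalIntegral.integral_comp_neg
    (fun w => Real.sinh w * Gfun (c - w))]
  rw [neg_zero, ← intervalIntegral.integral_symm, neg_neg]
  rfl

lemma cont_integrand (c : ℝ) : Continuous (fun u => Real.sinh u * Gfun (c - u)) :=
  Real.continuous_sinh.mul (continuous_Gfun.comp (continuous_const.sub continuous_id))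

lemma Gfun_ge (c v : ℝ) (h0 : 0 ≤ v) (hvc : v ≤ c) :
    Real.cosh (c - v) / Real.cosh c ≤ Gfun v := by
  rcases eq_or_lt_of_le h0 with rfl | hv
  · simp [Gfun, sub_zero, div_self (ne_of_gt (Real.cosh_pos c))]
  · have hs : 0 < Real.sinh v := by
      have := Real.self_lt_sinh_iff.mpr hv; linarith
    rw [Gfun, if_neg (ne_of_gt hv), div_le_div_iff₀ (Real.cosh_pos c) hs]
    have := sinh_mul_cosh_le c v h0 hvc
    nlinarith
  
lemma Jint_upper (c : ℝ) (hc : 0 ≤ c) : Jint c ≤ Real.cosh c - 1 := by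
  have h1 : Jint c ≤ ∫ u in (0:ℝ)..c, Real.sinh u := by
    apply integral_mono_on hc ((cont_integrand c).intervalIntegrable _ _)
      (Real.continuous_sinh.intervalIntegrable _ _)
    intro u hu
    rw [Set.mem_Icc] at hu
    have h2 : 0 ≤ Real.sinh u := Real.sinh_nonneg_iff.mpr hu.1
    calc Real.sinh u * Gfun (c - u) ≤ Real.sinh u * 1 :=
          mul_le_mul_of_nonneg_left (Gfun_le_one _) h2
      _ = Real.sinh u := mul_one _
  have h2 : (∫ u in (0:ℝ)..c, Real.sinh u) = Real.cosh c - 1 := by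
    rw [integral_eq_sub_of_hasDerivAt (fun x _ => Real.hasDerivAt_cosh x)
      (Real.continuous_sinh.intervalIntegrable _ _), Real.cosh_zero]
  linarith
  
lemma Jint_lower (c : ℝ) (hc : 0 ≤ c) :
    Real.sinh c ^ 2 / (2 * Real.cosh c) ≤ Jint c := by
  have hcosh : (0:ℝ) < Real.cosh c := Real.cosh_pos c
  have h1 : (∫ u in (0:ℝ)..c, Real.sinh u * Real.cosh u / Real.cosh c) ≤ Jint c := by
    apply integral_mono_on hc
      (((Real.continuous_sinh.mul Real.continuous_cosh).div_const _).intervalIntegrable _ _)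
      ((cont_integrand c).intervalIntegrable _ _)
    intro u hu
    rw [Set.mem_Icc] at hu
    have h2 : 0 ≤ Real.sinh u := Real.sinh_nonneg_iff.mpr hu.1
    have h3 : Real.cosh (c - (c - u)) / Real.cosh c ≤ Gfun (c - u) :=
      Gfun_ge c (c - u) (by linarith [hu.2]) (by linarith [hu.1])
    rw [show (c - (c - u) : ℝ) = u by ring] at h3
    calc Real.sinh u * Real.cosh u / Real.cosh c
        = Real.sinh u * (Real.cosh u / Real.cosh c) := by ring
      _ ≤ Real.sinh u * Gfun (c - u) := mul_le_mul_of_nonneg_left h3 h2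
  have h2 : (∫ u in (0:ℝ)..c, Real.sinh u * Real.cosh u / Real.cosh c)
      = Real.sinh c ^ 2 / (2 * Real.cosh c) := by
    rw [intervalIntegral.integral_div]
    have h3 : (∫ u in (0:ℝ)..c, Real.sinh u * Real.cosh u) = Real.sinh c ^ 2 / 2 := by
      have hd : ∀ x ∈ Set.uIcc (0:ℝ) c, HasDerivAt (fun w => Real.sinh w ^ 2 / 2)
          (Real.sinh x * Real.cosh x) x := by
        intro x _
        have : HasDerivAt (fun w => Real.sinh w ^ 2 / 2)
            (((2:ℕ):ℝ) * Real.sinh x ^ (2 - 1) * Real.cosh x / 2) x :=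
          ((Real.hasDerivAt_sinh x).fun_pow 2).div_const 2
        convert this using 1
        simp only [Nat.cast_ofNat, show (2:ℕ) - 1 = 1 from rfl, pow_one]
        ring
      rw [integral_eq_sub_of_hasDerivAt hd
        ((Real.continuous_sinh.mul Real.continuous_cosh).intervalIntegrable _ _)]
      simp
    rw [h3]
    ring
  linarith


lemma sab_exp_neg (a b : ℝ) (ha : 0 < a) (hb : 0 < b) :
    Real.sqrt (a * b) * Real.exp (-((1 / 2) * Real.log (a / b))) = b := by
  have h := sqrt_mul_exp b a hb ha
  rw [mul_comm b a] at h
  have harg : -((1 / 2 : ℝ) * Real.log (a / b)) = (1 / 2) * Real.log (b / a) := by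
    rw [Real.log_div (ne_of_gt hb) (ne_of_gt ha), Real.log_div (ne_of_gt ha) (ne_of_gt hb)]
    ring
  rw [harg, h]

/-- Bounds on `β_ε`:
`(ε²/4)(√a - √b)² ≤ (ε²/4)(a-b)²/(a+b) ≤ β_ε(a,b) ≤ (ε²/2)(√a - √b)²`. -/
theorem betaEps_bounds (ε a b : ℝ) (hε : 0 < ε) (ha : 0 < a) (hb : 0 < b) :
    ε ^ 2 / 4 * (Real.sqrt a - Real.sqrt b) ^ 2 ≤ ε ^ 2 / 4 * (a - b) ^ 2 / (a + b) ∧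
    ε ^ 2 / 4 * (a - b) ^ 2 / (a + b) ≤ betaEps ε a b ∧
    betaEps ε a b ≤ ε ^ 2 / 2 * (Real.sqrt a - Real.sqrt b) ^ 2 := by
  set c : ℝ := (1 / 2) * Real.log (a / b) with hc
  set sab : ℝ := Real.sqrt (a * b) with hsab
  have hsab0 : 0 < sab := Real.sqrt_pos.mpr (by positivity)
  have hexpA : sab * Real.exp c = a := sqrt_mul_exp a b ha hb
  have hexpB : sab * Real.exp (-c) = b := sab_exp_neg a b ha hb
  have e1 : 2 * sab * Real.cosh c = a + b := by
    rw [Real.cosh_eq]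
    linear_combination hexpA + hexpB
  have e2 : 2 * sab * Real.sinh c = a - b := by
    rw [Real.sinh_eq]
    linear_combination hexpA - hexpB
  have hcosh : (0:ℝ) < Real.cosh c := Real.cosh_pos c
  have hbeta : betaEps ε a b = ε ^ 2 * sab * Jint c := betaEps_eq ε a b hε ha hb
  have hJu : Jint c ≤ Real.cosh c - 1 := by
    rcases le_total 0 c with h | h
    · exact Jint_upper c h
    · rw [← Jint_neg, ← Real.cosh_neg]
      exact Jint_upper (-c) (by linarith)
  have hJl : Real.sinh c ^ 2 / (2 * Real.cosh c) ≤ Jint c := by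
    rcases le_total 0 c with h | h
    · exact Jint_lower c h
    · rw [← Jint_neg, ← Real.cosh_neg, show Real.sinh c ^ 2 = Real.sinh (-c) ^ 2 by
        rw [Real.sinh_neg]; ring]
      exact Jint_lower (-c) (by linarith)
  have hsa : Real.sqrt a ^ 2 = a := Real.sq_sqrt ha.le
  have hsb : Real.sqrt b ^ 2 = b := Real.sq_sqrt hb.le
  have hab : Real.sqrt a * Real.sqrt b = sab := (Real.sqrt_mul ha.le b).symm
  refine ⟨?_, ?_, ?_⟩
  · rw [le_div_iff₀ (by positivity : (0:ℝ) < a + b)]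
    have k1 : (Real.sqrt a + Real.sqrt b) ^ 2 = a + b + 2 * sab := by
      rw [add_sq, hsa, hsb]; linear_combination 2 * hab
    have k2 : (a - b) ^ 2 = (Real.sqrt a - Real.sqrt b) ^ 2 * (Real.sqrt a + Real.sqrt b) ^ 2 := by
      rw [← mul_pow]
      have : (Real.sqrt a - Real.sqrt b) * (Real.sqrt a + Real.sqrt b) = a - b := by
        linear_combination hsa - hsb
      rw [this]
    have k3 : (0:ℝ) ≤ ε ^ 2 / 4 * (Real.sqrt a - Real.sqrt b) ^ 2 * (2 * sab) := by positivity
    have k4 : ε ^ 2 / 4 * (a - b) ^ 2 - ε ^ 2 / 4 * (Real.sqrt a - Real.sqrt b) ^ 2 * (a + b)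
        = ε ^ 2 / 4 * (Real.sqrt a - Real.sqrt b) ^ 2 * (2 * sab) := by
      rw [k2, k1]; ring
    linarith [k3, k4]
  · have heq : ε ^ 2 / 4 * (a - b) ^ 2 / (a + b)
        = ε ^ 2 * sab * (Real.sinh c ^ 2 / (2 * Real.cosh c)) := by
      rw [← e2, ← e1]
      field_simp
      ring
    rw [hbeta, heq]
    exact mul_le_mul_of_nonneg_left hJl (by positivity)
  · have heq2 : ε ^ 2 / 2 * (Real.sqrt a - Real.sqrt b) ^ 2
        = ε ^ 2 * sab * (Real.cosh c - 1) := by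
      have h3 : (Real.sqrt a - Real.sqrt b) ^ 2 = a + b - 2 * sab := by
        rw [sub_sq, hsa, hsb]; linear_combination -2 * hab
      rw [h3, ← e1]; ring
    rw [hbeta, heq2]
    exact mul_le_mul_of_nonneg_left hJu (by positivity)
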